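/- Let (Ω, F, P) be a probability space, let N, M, T ≥ 1, let 0 ≤ p̲ ≤ p̄, let A be a real M×N matrix, let α ∈ ℝ^N and B a real N×N matrix with zᵀBz ≤ 0 for all z ∈ ℝ^N, and set D(p) = α + Bp, r(p) = ⟨p, D(p)⟩. Let γ ∈ ℝ^M and let φ : ℝ^M → ℝ be concave and continuous. Let p_1, …, p_T : Ω → ℝ^N be measurable random vectors taking values in [p̲, p̄]^N almost surely, and suppose E[Σ_{t=1}^T A D(p_t)] ≤ Tγ componentwise. Then E[Σ_{t=1}^T r(p_t) + T φ((1/T) Σ_{t=1}^T A D(p_t))] ≤ T · sup{ r(p) + φ(A D(p)) : p ∈ [p̲, p̄]^N, A D(p) ≤ γ componentwise }, and the supremum is over a nonempty set. -/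

import Mathlib

open Matrix MeasureTheory

section Aux

variable {N M : ℕ}

lemma r_conc_aux (α : Fin N → ℝ) (B : Matrix (Fin N) (Fin N) ℝ)
    (hB : ∀ z : Fin N → ℝ, z ⬝ᵥ (B *ᵥ z) ≤ 0)
    (x y : Fin N → ℝ) {a b : ℝ} (ha : 0 ≤ a) (hb : 0 ≤ b) (hab : a + b = 1) :
    a * (x ⬝ᵥ (α + B *ᵥ x)) + b * (y ⬝ᵥ (α + B *ᵥ y))
      ≤ (a • x + b • y) ⬝ᵥ (α + B *ᵥ (a • x + b • y)) := by
  have key := hB (x - y)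
  simp only [Matrix.mulVec_add, Matrix.mulVec_smul, Matrix.mulVec_sub,
    dotProduct_add, add_dotProduct, smul_dotProduct, dotProduct_smul,
    sub_dotProduct, dotProduct_sub, smul_eq_mul] at *
  have hb' : b = 1 - a := by linarith
  subst hb'
  nlinarith [key, mul_nonneg ha hb]

lemma affine_aux (A : Matrix (Fin M) (Fin N) ℝ) (α : Fin N → ℝ)
    (B : Matrix (Fin N) (Fin N) ℝ) (x y : Fin N → ℝ) {a b : ℝ} (hab : a + b = 1) :
    A *ᵥ (α + B *ᵥ (a • x + b • y)) = a • (A *ᵥ (α + B *ᵥ x)) + b • (A *ᵥ (α + B *ᵥ y)) := by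
  have h : α = a • α + b • α := by rw [← add_smul, hab, one_smul]
  conv_lhs => rw [h]
  simp only [Matrix.mulVec_add, Matrix.mulVec_smul, smul_add]
  abel

end Aux

/-- Proposition 1, `J_opt ≤ J_D`: any random price sequence whose expected
total resource consumption satisfies the inventory constraint achieves expected objective
at most `T` times the optimal value of the static fluid program, whose feasible set is
nonempty. -/
theorem stmt2 {Ω : Type*} [MeasurableSpace Ω] (P : Measure Ω) [IsProbabilityMeasure P]
    (N M T : ℕ) (hN : 1 ≤ N) (hM : 1 ≤ M) (hT : 1 ≤ T)
    (pl pu : ℝ) (hpl : 0 ≤ pl) (hplu : pl ≤ pu)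
    (A : Matrix (Fin M) (Fin N) ℝ) (α : Fin N → ℝ) (B : Matrix (Fin N) (Fin N) ℝ)
    (hB : ∀ z : Fin N → ℝ, z ⬝ᵥ (B *ᵥ z) ≤ 0)
    (γ : Fin M → ℝ) (φ : (Fin M → ℝ) → ℝ)
    (hφ : ConcaveOn ℝ Set.univ φ) (hφc : Continuous φ)
    (p : Fin T → Ω → Fin N → ℝ)
    (hmeas : ∀ t, Measurable (p t))
    (hbox : ∀ t, ∀ᵐ ω ∂P, ∀ i, pl ≤ p t ω i ∧ p t ω i ≤ pu)
    (hcons : ∀ j, (∫ ω, (∑ t, A *ᵥ (α + B *ᵥ p t ω)) j ∂P) ≤ (T : ℝ) * γ j) :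
    ({q : Fin N → ℝ | (∀ i, pl ≤ q i ∧ q i ≤ pu) ∧
        ∀ j, (A *ᵥ (α + B *ᵥ q)) j ≤ γ j}).Nonempty ∧
    (∫ ω, ((∑ t, (p t ω) ⬝ᵥ (α + B *ᵥ p t ω)) +
        (T : ℝ) * φ ((T : ℝ)⁻¹ • ∑ t, A *ᵥ (α + B *ᵥ p t ω))) ∂P)
      ≤ (T : ℝ) * sSup ((fun q : Fin N → ℝ =>
            q ⬝ᵥ (α + B *ᵥ q) + φ (A *ᵥ (α + B *ᵥ q))) ''
          {q : Fin N → ℝ | (∀ i, pl ≤ q i ∧ q i ≤ pu) ∧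
            ∀ j, (A *ᵥ (α + B *ᵥ q)) j ≤ γ j}) := by
  have hT0 : (0:ℝ) < (T : ℝ) := by exact_mod_cast hT
  have hpu : 0 ≤ pu := le_trans hpl hplu
  -- the feasible set and objective
  set S : Set (Fin N → ℝ) := {q : Fin N → ℝ | (∀ i, pl ≤ q i ∧ q i ≤ pu) ∧
      ∀ j, (A *ᵥ (α + B *ᵥ q)) j ≤ γ j} with hS
  set F : (Fin N → ℝ) → ℝ := fun q => q ⬝ᵥ (α + B *ᵥ q) + φ (A *ᵥ (α + B *ᵥ q)) with hF
  -- joint random vector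
  set f : Ω → (Fin T → Fin N → ℝ) := fun ω t => p t ω with hf
  set G : (Fin T → Fin N → ℝ) → ℝ := fun x =>
    (∑ t, (x t) ⬝ᵥ (α + B *ᵥ x t)) +
      (T : ℝ) * φ ((T : ℝ)⁻¹ • ∑ t, A *ᵥ (α + B *ᵥ x t)) with hG
  have hfm : Measurable f := measurable_pi_lambda _ fun t => hmeas t
  -- a.e. box membership
  set K : Set (Fin T → Fin N → ℝ) := Set.Icc (fun _ _ => pl) (fun _ _ => pu) with hK
  have hfK : ∀ᵐ ω ∂P, f ω ∈ K := by
    have := (ae_all_iff).2 hbox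
    filter_upwards [this] with ω h
    refine ⟨fun t i => (h t i).1, fun t i => (h t i).2⟩
  -- integrability of f
  have hnorm : ∀ᵐ ω ∂P, ‖f ω‖ ≤ pu := by
    filter_upwards [hfK] with ω h
    rw [pi_norm_le_iff_of_nonneg hpu]
    intro t
    rw [pi_norm_le_iff_of_nonneg hpu]
    intro i
    rw [Real.norm_eq_abs, abs_le]
    exact ⟨by linarith [h.1 t i, hpl], h.2 t i⟩
  have hfi : Integrable f P :=
    (integrable_const pu).mono' hfm.aestronglyMeasurable hnorm
  -- continuity of G
  have hrc : Continuous (fun q : Fin N → ℝ => q ⬝ᵥ (α + B *ᵥ q)) :=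
    continuous_id.dotProduct
      (continuous_const.add (continuous_const.matrix_mulVec continuous_id))
  have hADc : Continuous (fun q : Fin N → ℝ => A *ᵥ (α + B *ᵥ q)) :=
    continuous_const.matrix_mulVec
      (continuous_const.add (continuous_const.matrix_mulVec continuous_id))
  have hGc : Continuous G := by
    apply Continuous.add
    · exact continuous_finset_sum _ fun t _ => hrc.comp (continuous_apply t)
    · exact continuous_const.mul (hφc.comp (show Continuous fun x : Fin T → Fin N → ℝ =>
        (T : ℝ)⁻¹ • ∑ t, A *ᵥ (α + B *ᵥ x t) from (continuous_finset_sum Finset.univ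
        fun t _ => hADc.comp (continuous_apply t)).const_smul ((T : ℝ)⁻¹)))
  -- integrability of G ∘ f
  obtain ⟨C, hC⟩ := (isCompact_Icc (a := (fun _ _ => pl : Fin T → Fin N → ℝ))
    (b := fun _ _ => pu)).exists_bound_of_continuousOn hGc.continuousOn
  have hGfi : Integrable (fun ω => G (f ω)) P := by
    refine (integrable_const C).mono' (hGc.measurable.comp hfm).aestronglyMeasurable ?_
    filter_upwards [hfK] with ω h
    exact hC _ h
  -- concavity of G
  have hGconc : ConcaveOn ℝ Set.univ G := by
    refine ⟨convex_univ, fun x _ y _ a b ha hb hab => ?_⟩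
    simp only [hG, smul_eq_mul]
    have h1 : ∀ t : Fin T,
        a * ((x t) ⬝ᵥ (α + B *ᵥ x t)) + b * ((y t) ⬝ᵥ (α + B *ᵥ y t))
          ≤ ((a • x + b • y) t) ⬝ᵥ (α + B *ᵥ (a • x + b • y) t) := by
      intro t
      simpa using r_conc_aux α B hB (x t) (y t) ha hb hab
    have hsum1 : a * (∑ t, (x t) ⬝ᵥ (α + B *ᵥ x t)) + b * (∑ t, (y t) ⬝ᵥ (α + B *ᵥ y t))
        ≤ ∑ t, ((a • x + b • y) t) ⬝ᵥ (α + B *ᵥ (a • x + b • y) t) := by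
      rw [Finset.mul_sum, Finset.mul_sum, ← Finset.sum_add_distrib]
      exact Finset.sum_le_sum fun t _ => h1 t
    have hL : (T : ℝ)⁻¹ • ∑ t, A *ᵥ (α + B *ᵥ (a • x + b • y) t)
        = a • ((T : ℝ)⁻¹ • ∑ t, A *ᵥ (α + B *ᵥ x t))
          + b • ((T : ℝ)⁻¹ • ∑ t, A *ᵥ (α + B *ᵥ y t)) := by
      have : ∀ t : Fin T, A *ᵥ (α + B *ᵥ (a • x + b • y) t)
          = a • (A *ᵥ (α + B *ᵥ x t)) + b • (A *ᵥ (α + B *ᵥ y t)) := by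
        intro t
        simpa using affine_aux A α B (x t) (y t) hab
      simp only [this, Finset.sum_add_distrib, smul_add, ← Finset.smul_sum]
      rw [smul_comm a, smul_comm b]
    have hφ2 : a * φ ((T : ℝ)⁻¹ • ∑ t, A *ᵥ (α + B *ᵥ x t))
        + b * φ ((T : ℝ)⁻¹ • ∑ t, A *ᵥ (α + B *ᵥ y t))
        ≤ φ ((T : ℝ)⁻¹ • ∑ t, A *ᵥ (α + B *ᵥ (a • x + b • y) t)) := by
      rw [hL]
      simpa [smul_eq_mul] using hφ.2 (Set.mem_univ _) (Set.mem_univ _) ha hb hab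
    calc a * ((∑ t, (x t) ⬝ᵥ (α + B *ᵥ x t)) + (T:ℝ) * φ _)
          + b * ((∑ t, (y t) ⬝ᵥ (α + B *ᵥ y t)) + (T:ℝ) * φ _)
        = (a * (∑ t, (x t) ⬝ᵥ (α + B *ᵥ x t)) + b * (∑ t, (y t) ⬝ᵥ (α + B *ᵥ y t)))
          + (T:ℝ) * (a * φ ((T : ℝ)⁻¹ • ∑ t, A *ᵥ (α + B *ᵥ x t))
            + b * φ ((T : ℝ)⁻¹ • ∑ t, A *ᵥ (α + B *ᵥ y t))) := by ring
      _ ≤ (∑ t, ((a • x + b • y) t) ⬝ᵥ (α + B *ᵥ (a • x + b • y) t))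
          + (T:ℝ) * φ ((T : ℝ)⁻¹ • ∑ t, A *ᵥ (α + B *ᵥ (a • x + b • y) t)) :=
        add_le_add hsum1 (mul_le_mul_of_nonneg_left hφ2 hT0.le)
  -- Jensen
  have hJensen : (∫ ω, G (f ω) ∂P) ≤ G (∫ ω, f ω ∂P) :=
    hGconc.le_map_integral hGc.continuousOn isClosed_univ
      (Filter.Eventually.of_forall fun _ => Set.mem_univ _) hfi hGfi
  set xb : Fin T → Fin N → ℝ := ∫ ω, f ω ∂P with hxb
  have hxbK : xb ∈ K := (convex_Icc _ _).integral_mem isClosed_Icc hfK hfi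
  -- componentwise evaluation of xb
  have heval : ∀ t : Fin T, xb t = ∫ ω, p t ω ∂P := by
    intro t
    exact ((ContinuousLinearMap.proj (R := ℝ) (φ := fun _ : Fin T => Fin N → ℝ)
      t).integral_comp_comm hfi).symm
  have hpti : ∀ t : Fin T, Integrable (fun ω => p t ω) P := fun t =>
    (ContinuousLinearMap.proj (R := ℝ) (φ := fun _ : Fin T => Fin N → ℝ)
      t).integrable_comp hfi
  -- per-period expected consumption
  set Lc : (Fin N → ℝ) →L[ℝ] (Fin M → ℝ) := LinearMap.toContinuousLinearMap (A * B).mulVecLin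
    with hLc
  have hADre : ∀ v : Fin N → ℝ, A *ᵥ (α + B *ᵥ v) = (A *ᵥ α) + Lc v := by
    intro v
    simp [hLc, Matrix.mulVec_add, Matrix.mulVec_mulVec]
  have hADint : ∀ t : Fin T, Integrable (fun ω => A *ᵥ (α + B *ᵥ p t ω)) P := by
    intro t
    simp only [hADre]
    exact (integrable_const _).add (Lc.integrable_comp (hpti t))
  have hADt : ∀ t : Fin T, (∫ ω, A *ᵥ (α + B *ᵥ p t ω) ∂P) = A *ᵥ (α + B *ᵥ xb t) := by
    intro t
    simp only [hADre]
    rw [integral_add (integrable_const _) (Lc.integrable_comp (hpti t)),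
      integral_const, probReal_univ, one_smul,
      Lc.integral_comp_comm (hpti t), ← heval t]
  have hsumint : Integrable (fun ω => ∑ t, A *ᵥ (α + B *ᵥ p t ω)) P :=
    integrable_finset_sum _ fun t _ => hADint t
  have hsumInt : (∫ ω, (∑ t, A *ᵥ (α + B *ᵥ p t ω)) ∂P) = ∑ t, A *ᵥ (α + B *ᵥ xb t) := by
    rw [integral_finset_sum _ fun t _ => hADint t]
    exact Finset.sum_congr rfl fun t _ => hADt t
  -- the candidate static price
  set qb : Fin N → ℝ := (T : ℝ)⁻¹ • ∑ t, xb t with hqb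
  have hADqb : A *ᵥ (α + B *ᵥ qb) = (T : ℝ)⁻¹ • ∑ t, A *ᵥ (α + B *ᵥ xb t) := by
    simp only [hADre, hqb]
    rw [_root_.map_smul, map_sum Lc]
    rw [Finset.sum_add_distrib, Finset.sum_const, Finset.card_univ, Fintype.card_fin,
      smul_add, ← Nat.cast_smul_eq_nsmul ℝ, smul_smul, inv_mul_cancel₀ hT0.ne', one_smul]
  -- feasibility of qb : box
  have hxbbox : ∀ t i, pl ≤ xb t i ∧ xb t i ≤ pu := by
    intro t i
    exact ⟨hxbK.1 t i, hxbK.2 t i⟩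
  have hqbbox : ∀ i, pl ≤ qb i ∧ qb i ≤ pu := by
    intro i
    have h1 : (T:ℝ) * pl ≤ ∑ t, xb t i := by
      calc (T:ℝ) * pl = ∑ _t : Fin T, pl := by
            rw [Finset.sum_const, Finset.card_univ, Fintype.card_fin, nsmul_eq_mul]
        _ ≤ ∑ t, xb t i := Finset.sum_le_sum fun t _ => (hxbbox t i).1
    have h2 : ∑ t, xb t i ≤ (T:ℝ) * pu := by
      calc ∑ t, xb t i ≤ ∑ _t : Fin T, pu := Finset.sum_le_sum fun t _ => (hxbbox t i).2
        _ = (T:ℝ) * pu := by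
            rw [Finset.sum_const, Finset.card_univ, Fintype.card_fin, nsmul_eq_mul]
    have hqbi : qb i = (T:ℝ)⁻¹ * ∑ t, xb t i := by
      simp [hqb, Finset.sum_apply]
    constructor
    · rw [hqbi]
      calc pl = (T:ℝ)⁻¹ * ((T:ℝ) * pl) := by field_simp
        _ ≤ (T:ℝ)⁻¹ * ∑ t, xb t i := mul_le_mul_of_nonneg_left h1 (inv_nonneg.2 hT0.le)
    · rw [hqbi]
      calc (T:ℝ)⁻¹ * ∑ t, xb t i ≤ (T:ℝ)⁻¹ * ((T:ℝ) * pu) :=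
            mul_le_mul_of_nonneg_left h2 (inv_nonneg.2 hT0.le)
        _ = pu := by field_simp
  -- feasibility of qb : consumption
  have hqbcons : ∀ j, (A *ᵥ (α + B *ᵥ qb)) j ≤ γ j := by
    intro j
    have hj : (∫ ω, (∑ t, A *ᵥ (α + B *ᵥ p t ω)) j ∂P)
        = (∑ t, A *ᵥ (α + B *ᵥ xb t)) j := by
      rw [← hsumInt]
      exact ((ContinuousLinearMap.proj (R := ℝ) (φ := fun _ : Fin M => ℝ)
        j).integral_comp_comm hsumint)
    have h := hcons j
    rw [hj] at h
    rw [hADqb]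
    have : ((T : ℝ)⁻¹ • ∑ t, A *ᵥ (α + B *ᵥ xb t)) j
        = (T:ℝ)⁻¹ * (∑ t, A *ᵥ (α + B *ᵥ xb t)) j := rfl
    rw [this]
    calc (T:ℝ)⁻¹ * (∑ t, A *ᵥ (α + B *ᵥ xb t)) j ≤ (T:ℝ)⁻¹ * ((T:ℝ) * γ j) :=
          mul_le_mul_of_nonneg_left h (inv_nonneg.2 hT0.le)
      _ = γ j := by field_simp
  have hqbS : qb ∈ S := ⟨hqbbox, hqbcons⟩
  refine ⟨⟨qb, hqbS⟩, ?_⟩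
  -- finite Jensen for the revenue term
  have hrconc : ConcaveOn ℝ Set.univ (fun q : Fin N → ℝ => q ⬝ᵥ (α + B *ᵥ q)) :=
    ⟨convex_univ, fun x _ y _ a b ha hb hab => by
      simpa [smul_eq_mul] using r_conc_aux α B hB x y ha hb hab⟩
  have hrsum : ∑ t, (xb t) ⬝ᵥ (α + B *ᵥ xb t) ≤ (T:ℝ) * (qb ⬝ᵥ (α + B *ᵥ qb)) := by
    have hw : ∑ _t : Fin T, (T:ℝ)⁻¹ = 1 := by
      rw [Finset.sum_const, Finset.card_univ, Fintype.card_fin, nsmul_eq_mul,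
        mul_inv_cancel₀ hT0.ne']
    have := hrconc.le_map_sum (t := Finset.univ) (w := fun _ : Fin T => (T:ℝ)⁻¹)
      (p := fun t => xb t) (fun _ _ => inv_nonneg.2 hT0.le) hw (fun _ _ => Set.mem_univ _)
    have hq : ∑ t, (T:ℝ)⁻¹ • xb t = qb := by rw [hqb, Finset.smul_sum]
    rw [hq] at this
    have h2 : ∑ t, (T:ℝ)⁻¹ • ((xb t) ⬝ᵥ (α + B *ᵥ xb t))
        = (T:ℝ)⁻¹ * ∑ t, (xb t) ⬝ᵥ (α + B *ᵥ xb t) := by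
      rw [Finset.mul_sum]; simp [smul_eq_mul]
    rw [h2] at this
    calc ∑ t, (xb t) ⬝ᵥ (α + B *ᵥ xb t)
        = (T:ℝ) * ((T:ℝ)⁻¹ * ∑ t, (xb t) ⬝ᵥ (α + B *ᵥ xb t)) := by field_simp
      _ ≤ (T:ℝ) * (qb ⬝ᵥ (α + B *ᵥ qb)) := mul_le_mul_of_nonneg_left this hT0.le
  -- G xb ≤ T * F qb
  have hGxb : G xb ≤ (T:ℝ) * F qb := by
    have hφeq : φ ((T : ℝ)⁻¹ • ∑ t, A *ᵥ (α + B *ᵥ xb t)) = φ (A *ᵥ (α + B *ᵥ qb)) := by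
      rw [hADqb]
    calc G xb = (∑ t, (xb t) ⬝ᵥ (α + B *ᵥ xb t))
          + (T:ℝ) * φ ((T : ℝ)⁻¹ • ∑ t, A *ᵥ (α + B *ᵥ xb t)) := rfl
      _ ≤ (T:ℝ) * (qb ⬝ᵥ (α + B *ᵥ qb)) + (T:ℝ) * φ (A *ᵥ (α + B *ᵥ qb)) := by
          rw [hφeq]; exact add_le_add_left hrsum _
      _ = (T:ℝ) * F qb := by rw [hF]; ring
  -- F qb ≤ sSup (F '' S)
  have hScomp : IsCompact S := by
    have hsub : S ⊆ Set.Icc (fun _ => pl) (fun _ => pu) := by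
      intro q hq
      exact ⟨fun i => (hq.1 i).1, fun i => (hq.1 i).2⟩
    have hclosed : IsClosed S := by
      have : S = (Set.Icc (fun _ => pl) (fun _ => pu)) ∩
          ⋂ j, {q : Fin N → ℝ | (A *ᵥ (α + B *ᵥ q)) j ≤ γ j} := by
        ext q
        simp only [hS, Set.mem_setOf_eq, Set.mem_inter_iff, Set.mem_Icc, Set.mem_iInter,
          Pi.le_def]
        constructor
        · rintro ⟨h1, h2⟩; exact ⟨⟨fun i => (h1 i).1, fun i => (h1 i).2⟩, h2⟩
        · rintro ⟨⟨h1, h2⟩, h3⟩; exact ⟨fun i => ⟨h1 i, h2 i⟩, h3⟩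
      rw [this]
      exact isClosed_Icc.inter (isClosed_iInter fun j =>
        isClosed_le ((continuous_apply j).comp hADc) continuous_const)
    exact isCompact_Icc.of_isClosed_subset hclosed hsub
  have hFc : Continuous F := hrc.add (hφc.comp hADc)
  have hbdd : BddAbove (F '' S) := (hScomp.image hFc).bddAbove
  have hFle : F qb ≤ sSup (F '' S) := le_csSup hbdd ⟨qb, hqbS, rfl⟩
  -- conclude
  calc (∫ ω, ((∑ t, (p t ω) ⬝ᵥ (α + B *ᵥ p t ω)) +
        (T : ℝ) * φ ((T : ℝ)⁻¹ • ∑ t, A *ᵥ (α + B *ᵥ p t ω))) ∂P)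
      = ∫ ω, G (f ω) ∂P := rfl
    _ ≤ G xb := hJensen
    _ ≤ (T:ℝ) * F qb := hGxb
    _ ≤ (T:ℝ) * sSup (F '' S) := mul_le_mul_of_nonneg_left hFle hT0.le
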